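/- Let C ⊆ F_q^n be a k-dimensional F_q-linear code (1 ≤ k < n) and let f_1,…,f_{q^k} : C → F_p be functions with f_1 ≡ 0 and f_i(0) = 0 for all i, such that H = [ω^{f_i(c)}] is a BH(q^k,p) matrix (i.e., Σ_{c∈C} ω^{f_i(c) − f_j(c)} = 0 whenever i ≠ j). Let m ≥ 2 and Q = span_ℂ{φ_{f_i}^{⊗m} : 1 ≤ i ≤ q^k} ⊆ ((F_q^n)^m → ℂ). Define stab(Q) = {(μ,a,b) ∈ ℂ × F_q^{nm} × F_q^{nm} : μ·X(a)Z(b)v = v for all v ∈ Q}, and suppose Q is a stabilizer code, i.e., every w : (F_q^n)^m → ℂ satisfying μ·X(a)Z(b)w = w for all (μ,a,b) ∈ stab(Q) belongs to Q. Then every f_i is F_p-linear; consequently there exist a bijection σ : {1,…,q^k} → F_p^{rk} and an F_p-linear isomorphism τ : C → F_p^{rk} such that f_i(c) = σ(i)·τ(c) for all i and all c ∈ C, i.e., H is equivalent to the rk-fold Kronecker product of the Fourier matrix of order p. -/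

import Mathlib

open Matrix

attribute [local instance] Classical.propDecidable

/-- `ω^a` where `ω = exp(2πi/p)` and `a : ZMod p`. -/
noncomputable def omg (p : ℕ) (a : ZMod p) : ℂ :=
  Complex.exp (2 * Real.pi * Complex.I * (a.val : ℂ) / (p : ℂ))

theorem omg_eq_pow (p : ℕ) (a : ZMod p) :
    omg p a = Complex.exp (2 * Real.pi * Complex.I / p) ^ a.val := by
  rw [omg, ← Complex.exp_nat_mul]
  ring_nf

theorem omg_zero (p : ℕ) : omg p 0 = 1 := by
  simp [omg]

theorem pow_val_eq (p : ℕ) (hp : p ≠ 0) (x : ℕ) :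
    Complex.exp (2 * Real.pi * Complex.I / p) ^ x
      = Complex.exp (2 * Real.pi * Complex.I / p) ^ (x % p) := by
  set z := Complex.exp (2 * Real.pi * Complex.I / p)
  have hz : z ^ p = 1 := by
    have := (Complex.isPrimitiveRoot_exp p hp).pow_eq_one
    simpa using this
  conv_lhs => rw [← Nat.div_add_mod x p, pow_add, pow_mul, hz, one_pow, one_mul]

theorem omg_add (p : ℕ) [NeZero p] (a b : ZMod p) :
    omg p (a + b) = omg p a * omg p b := by
  have hp : p ≠ 0 := NeZero.ne p
  rw [omg_eq_pow, omg_eq_pow, omg_eq_pow, ← pow_add, ZMod.val_add, ← pow_val_eq p hp]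

theorem omg_ne_zero (p : ℕ) (a : ZMod p) : omg p a ≠ 0 := Complex.exp_ne_zero _

theorem omg_inj (p : ℕ) [NeZero p] {a b : ZMod p} (h : omg p a = omg p b) : a = b := by
  have hp : p ≠ 0 := NeZero.ne p
  rw [omg_eq_pow, omg_eq_pow] at h
  have := (Complex.isPrimitiveRoot_exp p hp).pow_inj (ZMod.val_lt a) (ZMod.val_lt b) h
  exact ZMod.val_injective p this

theorem omg_sum (p : ℕ) [NeZero p] {ι : Type*} (s : Finset ι) (g : ι → ZMod p) :
    omg p (∑ i ∈ s, g i) = ∏ i ∈ s, omg p (g i) := by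
  classical
  induction s using Finset.induction with
  | empty => simp [omg_zero]
  | insert _ _ h ih => rw [Finset.sum_insert h, Finset.prod_insert h, omg_add, ih]

theorem omg_sub_self (p : ℕ) [NeZero p] (a b : ZMod p) :
    omg p (a + b) * omg p (-b) = omg p a := by
  rw [← omg_add]; ring_nf

theorem omg_helper (p : ℕ) [NeZero p] (a b d : ZMod p) :
    omg p (a + b) * omg p (-d) = omg p a * omg p (b - d) := by
  rw [← omg_add, ← omg_add]
  ring_nf


set_option maxHeartbeats 2000000 in
/-- if `H = [ω^{f_i(c)}]` is a normalized `BH(q^k,p)` matrix and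
`Q = span{φ_{f_i}^{⊗m}}` is a stabilizer code (i.e. it equals the joint fixed space of
its stabilizer group `stab(Q)`), then every `f_i` is `F_p`-linear; consequently
`f_i(c) = σ(i)·τ(c)` for a bijection `σ` onto `F_p^{rk}` and an `F_p`-linear isomorphism
`τ : C ≃ F_p^{rk}`, i.e. `H` is equivalent to the `rk`-fold Kronecker product of the
Fourier matrix of order `p`. -/
theorem stmt_15 (p r n k m : ℕ) [Fact p.Prime] (hr : 0 < r) (hk1 : 1 ≤ k) (hkn : k < n)
    (hm : 2 ≤ m)
    (F : Type) [Field F] [Fintype F] [Algebra (ZMod p) F] (hF : Fintype.card F = p ^ r)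
    (C : Submodule F (Fin n → F)) (hC : Module.finrank F C = k)
    (f : Fin ((p ^ r) ^ k) → ↥C → ZMod p)
    (i0 : Fin ((p ^ r) ^ k)) (hi0 : ∀ c : ↥C, f i0 c = 0)
    (hf00 : ∀ i, f i 0 = 0)
    (hBH : ∀ i j, i ≠ j → ∑ c : ↥C, omg p (f i c - f j c) = 0)
    (Φ : Fin ((p ^ r) ^ k) → (Fin m → Fin n → F) → ℂ)
    (hΦ : ∀ i x, Φ i x = ∏ j : Fin m,
      (if hx : x j ∈ C then (Real.sqrt ((p ^ r) ^ k))⁻¹ * omg p (f i ⟨x j, hx⟩) else 0))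
    (hstab : ∀ v : (Fin m → Fin n → F) → ℂ,
      (∀ (μ : ℂ) (a b : Fin m → Fin n → F),
        (∀ u ∈ Submodule.span ℂ (Set.range Φ), ∀ x : Fin m → Fin n → F,
          μ * (omg p (Algebra.trace (ZMod p) F (∑ i : Fin m, b i ⬝ᵥ (x i - a i)))
            * u (fun i => x i - a i)) = u x) →
        (∀ x : Fin m → Fin n → F,
          μ * (omg p (Algebra.trace (ZMod p) F (∑ i : Fin m, b i ⬝ᵥ (x i - a i)))
            * v (fun i => x i - a i)) = v x)) →
      v ∈ Submodule.span ℂ (Set.range Φ)) :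
    (∀ i, IsLinearMap (ZMod p) (f i))
    ∧ ∃ (σ : Fin ((p ^ r) ^ k) ≃ (Fin (r * k) → ZMod p))
        (τ : ↥C ≃ₗ[ZMod p] (Fin (r * k) → ZMod p)),
        ∀ (i : Fin ((p ^ r) ^ k)) (c : ↥C), f i c = σ i ⬝ᵥ τ c := by
  have hprime : p.Prime := Fact.out
  haveI : NeZero p := ⟨hprime.ne_zero⟩
  have hppos : 0 < p := hprime.pos
  -- the normalization constant
  set sInv : ℝ := (Real.sqrt ((p ^ r) ^ k))⁻¹ with hsInv
  have hsInvne : sInv ≠ 0 := by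
    have : (0:ℝ) < Real.sqrt ((p ^ r) ^ k) := by
      apply Real.sqrt_pos.mpr
      positivity
    simpa [hsInv] using ne_of_gt this
  set K : ℂ := ((sInv : ℝ) : ℂ) ^ m with hKdef
  have hKne : K ≠ 0 := by
    apply pow_ne_zero
    simpa using hsInvne
  -- cardinality of C is nonzero
  have hNCne : ((Fintype.card ↥C : ℕ) : ℂ) ≠ 0 := by
    have : 0 < Fintype.card ↥C := Fintype.card_pos_iff.mpr ⟨0⟩
    exact Nat.cast_ne_zero.mpr this.ne'
  -- evaluation of Φ at points of C^m
  have hphi : ∀ i (y : Fin m → ↥C),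
      Φ i (fun j => (y j : Fin n → F)) = K * omg p (∑ j : Fin m, f i (y j)) := by
    intro i y
    rw [hΦ]
    have : ∀ j : Fin m, (if hx : (y j : Fin n → F) ∈ C
        then ((sInv : ℝ) : ℂ) * omg p (f i ⟨(y j : Fin n → F), hx⟩) else 0)
        = ((sInv : ℝ) : ℂ) * omg p (f i (y j)) := by
      intro j
      rw [dif_pos (y j).2]
    calc (∏ j : Fin m, if hx : (y j : Fin n → F) ∈ C
          then ((sInv : ℝ) : ℂ) * omg p (f i ⟨(y j : Fin n → F), hx⟩) else 0)
        = ∏ j : Fin m, ((sInv : ℝ) : ℂ) * omg p (f i (y j)) :=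
          Finset.prod_congr rfl (fun j _ => this j)
      _ = K * omg p (∑ j : Fin m, f i (y j)) := by
          rw [Finset.prod_mul_distrib, Finset.prod_const, omg_sum]
          simp [hKdef]
  -- Φ vanishes off C^m
  have hphi0 : ∀ i (x : Fin m → Fin n → F) (j : Fin m), x j ∉ C → Φ i x = 0 := by
    intro i x j hj
    rw [hΦ]
    exact Finset.prod_eq_zero (Finset.mem_univ j) (dif_neg hj)
  -- Φ i0 takes value K on C^m
  have hphi_i0 : ∀ (y : Fin m → ↥C), Φ i0 (fun j => (y j : Fin n → F)) = K := by
    intro y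
    rw [hphi]
    simp [hi0, omg_zero]
  -- value K on arbitrary clean points
  have h00 : Φ i0 (fun _ => (0 : Fin n → F)) = K := by
    have := hphi_i0 (fun _ => (0 : ↥C))
    simpa using this
  -- additivity of each f
  have hadd : ∀ (j0 : Fin ((p ^ r) ^ k)) (a0 u : ↥C), f j0 (u + a0) = f j0 u + f j0 a0 := by
    intro j0 a0
    have h0m : 0 < m := by omega
    have h1m : 1 < m := by omega
    set i₀ : Fin m := ⟨0, h0m⟩ with hi₀
    set i₁ : Fin m := ⟨1, h1m⟩ with hi₁
    have hi01 : i₀ ≠ i₁ := by simp [hi₀, hi₁, Fin.ext_iff]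
    set ye : Fin m → ↥C := fun i => if i = i₀ then a0 else 0 with hye
    set e : Fin m → Fin n → F := fun i => (ye i : Fin n → F) with he
    set v : (Fin m → Fin n → F) → ℂ := fun y => Φ j0 (fun i => y i + e i) with hvdef
    have hspanΦ : ∀ j, Φ j ∈ Submodule.span ℂ (Set.range Φ) :=
      fun j => Submodule.subset_span ⟨j, rfl⟩
    have hv : v ∈ Submodule.span ℂ (Set.range Φ) := by
      apply hstab
      intro μ a b hfix
      have Ei0 := hfix (Φ i0) (hspanΦ i0)
      have Ej0 := hfix (Φ j0) (hspanΦ j0)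
      have hμ0 : μ ≠ 0 := by
        intro hμ
        have h1 := Ei0 (fun _ => 0)
        rw [hμ, zero_mul, h00] at h1
        exact hKne h1.symm
      have hEa := Ei0 a
      rw [show (∑ i : Fin m, b i ⬝ᵥ (a i - a i)) = 0 by simp, map_zero, omg_zero, one_mul]
        at hEa
      rw [show (fun i => a i - a i) = (fun _ => (0 : Fin n → F)) by funext i; simp, h00] at hEa
      -- hEa : μ * K = Φ i0 a
      have haC : ∀ i, a i ∈ C := by
        by_contra hcon
        push_neg at hcon
        obtain ⟨j, hj⟩ := hcon
        rw [hphi0 i0 a j hj] at hEa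
        rcases mul_eq_zero.mp hEa with h | h
        · exact hμ0 h
        · exact hKne h
      set ya : Fin m → ↥C := fun i => ⟨a i, haC i⟩ with hya
      have hPa : Φ i0 a = K := by
        have := hphi_i0 ya
        simpa [hya] using this
      have hμ1 : μ = 1 := by
        apply mul_right_cancel₀ hKne
        rw [hEa, hPa, one_mul]
      -- the phase attached to e is trivial
      have hTe : omg p (Algebra.trace (ZMod p) F (∑ i : Fin m, b i ⬝ᵥ e i)) = 1 := by
        have hEe := Ei0 (fun i => a i + e i)
        simp only [add_sub_cancel_left] at hEe
        have hPe : Φ i0 e = K := by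
          rw [he]; exact hphi_i0 ye
        have hPae : Φ i0 (fun i => a i + e i) = K := by
          have := hphi_i0 (fun i => ya i + ye i)
          simpa [hya, he] using this
        rw [hμ1, one_mul, hPe, hPae] at hEe
        apply mul_right_cancel₀ hKne
        rw [hEe, one_mul]
      intro x
      have hEx := Ej0 (fun i => x i + e i)
      have hre : ∀ (A B D : Fin n → F), A + B - D = A - D + B := fun A B D => by abel
      simp only [hre] at hEx
      simp only [dotProduct_add, Finset.sum_add_distrib, map_add, omg_add] at hEx
      rw [hTe, mul_one] at hEx
      rw [hμ1, one_mul] at hEx ⊢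
      simp only [hvdef]
      exact hEx
    rw [Submodule.mem_span_range_iff_exists_fun ℂ] at hv
    obtain ⟨c, hc⟩ := hv
    have hceval : ∀ z, (∑ j, c j * Φ j z) = v z := by
      intro z
      have := congrFun hc z
      simpa [Finset.sum_apply, Pi.smul_apply, smul_eq_mul] using this
    set yuw : ↥C → ↥C → Fin m → ↥C :=
      fun u w i => if i = i₀ then u else if i = i₁ then w else 0 with hyuw
    have hsumf : ∀ (j : Fin ((p ^ r) ^ k)) (u w : ↥C),
        (∑ i : Fin m, f j (yuw u w i)) = f j u + f j w := by
      intro j u w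
      have hterm : ∀ i : Fin m, f j (yuw u w i)
          = (if i = i₀ then f j u else 0) + (if i = i₁ then f j w else 0) := by
        intro i
        by_cases h1 : i = i₀
        · simp [hyuw, h1, hi01, hi01.symm]
        · by_cases h2 : i = i₁
          · simp [hyuw, h1, h2, Ne.symm hi01]
          · simp [hyuw, h1, h2, hf00]
      rw [Finset.sum_congr rfl (fun i _ => hterm i), Finset.sum_add_distrib,
        Finset.sum_ite_eq' Finset.univ i₀ (fun _ => f j u),
        Finset.sum_ite_eq' Finset.univ i₁ (fun _ => f j w)]
      simp
    have hphiuw : ∀ (j : Fin ((p ^ r) ^ k)) (u w : ↥C),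
        Φ j (fun i => (yuw u w i : Fin n → F)) = K * omg p (f j u + f j w) := by
      intro j u w; rw [hphi, hsumf]
    have hplus : ∀ (u w : ↥C),
        (fun i => (yuw u w i : Fin n → F) + e i)
          = (fun i => (yuw (u + a0) w i : Fin n → F)) := by
      intro u w; funext i
      by_cases h1 : i = i₀
      · simp [hyuw, hye, he, h1]
      · by_cases h2 : i = i₁ <;> simp [hyuw, hye, he, h1, h2, Ne.symm hi01]
    have Euw : ∀ u w : ↥C, (∑ j, c j * (K * omg p (f j u + f j w)))
        = K * omg p (f j0 (u + a0) + f j0 w) := by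
      intro u w
      have h1 := hceval (fun i => (yuw u w i : Fin n → F))
      simp only [hphiuw] at h1
      have h2 : v (fun i => (yuw u w i : Fin n → F)) = K * omg p (f j0 (u + a0) + f j0 w) := by
        simp only [hvdef]
        rw [hplus u w]
        exact hphiuw j0 (u + a0) w
      rw [h2] at h1
      exact h1
    have hkey : ∀ u : ↥C, c j0 * omg p (f j0 u) = omg p (f j0 (u + a0)) := by
      intro u
      have hL : (∑ w : ↥C, (∑ j, c j * (K * omg p (f j u + f j w))) * omg p (-(f j0 w)))
          = c j0 * K * omg p (f j0 u) * ((Fintype.card ↥C : ℕ) : ℂ) := by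
        have hswap : (∑ w : ↥C, (∑ j, c j * (K * omg p (f j u + f j w))) * omg p (-(f j0 w)))
            = ∑ j, ∑ w : ↥C, c j * (K * omg p (f j u + f j w)) * omg p (-(f j0 w)) := by
          rw [Finset.sum_comm]
          apply Finset.sum_congr rfl
          intro j _
          rw [Finset.sum_mul]
        rw [hswap]
        have hinner : ∀ j1, (∑ w : ↥C, c j1 * (K * omg p (f j1 u + f j1 w)) * omg p (-(f j0 w)))
            = c j1 * K * omg p (f j1 u) * (∑ w : ↥C, omg p (f j1 w - f j0 w)) := by
          intro j1
          rw [Finset.mul_sum]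
          apply Finset.sum_congr rfl
          intro w _
          have h3 := omg_helper p (f j1 u) (f j1 w) (f j0 w)
          calc c j1 * (K * omg p (f j1 u + f j1 w)) * omg p (-(f j0 w))
              = c j1 * K * (omg p (f j1 u + f j1 w) * omg p (-(f j0 w))) := by ring
            _ = c j1 * K * (omg p (f j1 u) * omg p (f j1 w - f j0 w)) := by rw [h3]
            _ = c j1 * K * omg p (f j1 u) * omg p (f j1 w - f j0 w) := by ring
        rw [Finset.sum_congr rfl (fun j1 _ => hinner j1)]
        rw [Finset.sum_eq_single j0]
        · simp [omg_zero]
        · intro j1 _ hne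
          rw [hBH j1 j0 hne, mul_zero]
        · intro h; exact absurd (Finset.mem_univ j0) h
      have hR : (∑ w : ↥C, (K * omg p (f j0 (u + a0) + f j0 w)) * omg p (-(f j0 w)))
          = K * omg p (f j0 (u + a0)) * ((Fintype.card ↥C : ℕ) : ℂ) := by
        have hterm : ∀ w : ↥C, (K * omg p (f j0 (u + a0) + f j0 w)) * omg p (-(f j0 w))
            = K * omg p (f j0 (u + a0)) := by
          intro w
          rw [mul_assoc, omg_sub_self]
        rw [Finset.sum_congr rfl (fun w _ => hterm w), Finset.sum_const, Finset.card_univ,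
          nsmul_eq_mul]
        ring
      have heq : c j0 * K * omg p (f j0 u) * ((Fintype.card ↥C : ℕ) : ℂ)
          = K * omg p (f j0 (u + a0)) * ((Fintype.card ↥C : ℕ) : ℂ) := by
        rw [← hL, ← hR]
        exact Finset.sum_congr rfl (fun w _ => by rw [Euw u w])
      have h2 := mul_right_cancel₀ hNCne heq
      have h3 : K * (c j0 * omg p (f j0 u)) = K * omg p (f j0 (u + a0)) := by
        rw [← h2]; ring
      exact mul_left_cancel₀ hKne h3
    have hc0 : c j0 = omg p (f j0 a0) := by
      have h4 := hkey 0
      rw [hf00 j0, omg_zero, mul_one, zero_add] at h4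
      exact h4
    intro u
    have h5 := hkey u
    rw [hc0, ← omg_add] at h5
    rw [← omg_inj p h5, add_comm]
  -- linearity
  have hlin : ∀ i, IsLinearMap (ZMod p) (f i) := by
    intro i
    have hmadd : ∀ x y : ↥C, f i (x + y) = f i x + f i y := fun x y => hadd i y x
    refine ⟨hmadd, ?_⟩
    intro z x
    have hns : ∀ (t : ℕ) (x : ↥C), f i (t • x) = t • f i x := by
      intro t
      induction t with
      | zero => intro x; simp [hf00]
      | succ t ih => intro x; rw [succ_nsmul, succ_nsmul, hmadd, ih]
    have hz : ((z.val : ℕ) : ZMod p) = z := ZMod.natCast_rightInverse z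
    rw [← hz, Nat.cast_smul_eq_nsmul, Nat.cast_smul_eq_nsmul]
    exact hns z.val x
  refine ⟨hlin, ?_⟩
  -- the f i are pairwise distinct
  have hfinj : ∀ i j, (∀ c : ↥C, f i c = f j c) → i = j := by
    intro i j hij
    by_contra hne
    have hzero := hBH i j hne
    rw [Finset.sum_congr rfl (fun c _ => by rw [hij c, sub_self, omg_zero])] at hzero
    rw [Finset.sum_const, Finset.card_univ, nsmul_eq_mul, mul_one] at hzero
    exact hNCne hzero
  -- cardinality of C as a ZMod p vector space
  have hcardC : Fintype.card ↥C = p ^ (r * k) := by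
    have h1 : Fintype.card ↥C = Fintype.card F ^ Module.finrank F ↥C :=
      Module.card_eq_pow_finrank (K := F)
    rw [hC, hF, ← pow_mul] at h1
    exact h1
  have hrankC : Module.finrank (ZMod p) ↥C = r * k := by
    have h1 : Fintype.card ↥C = Fintype.card (ZMod p) ^ Module.finrank (ZMod p) ↥C :=
      Module.card_eq_pow_finrank (K := ZMod p)
    rw [ZMod.card, hcardC] at h1
    exact (Nat.pow_right_injective hprime.two_le h1.symm)
  let bC : Module.Basis (Fin (r * k)) (ZMod p) ↥C :=
    (Module.finBasis (ZMod p) ↥C).reindex (finCongr hrankC)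
  let τ : ↥C ≃ₗ[ZMod p] (Fin (r * k) → ZMod p) := bC.equivFun
  set δ : Fin (r * k) → (Fin (r * k) → ZMod p) :=
    fun t => fun j => if t = j then 1 else 0 with hδ
  set σ0 : Fin ((p ^ r) ^ k) → (Fin (r * k) → ZMod p) :=
    fun i t => f i (τ.symm (δ t)) with hσ0
  have hform : ∀ i (c : ↥C), f i c = σ0 i ⬝ᵥ τ c := by
    intro i c
    let L : ↥C →ₗ[ZMod p] ZMod p := IsLinearMap.mk' (f i) (hlin i)
    have hLf : ∀ x : ↥C, f i x = L x := fun x => rfl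
    have hdecomp : (τ c : Fin (r * k) → ZMod p) = ∑ t, (τ c) t • δ t := pi_eq_sum_univ (τ c)
    calc f i c = L (τ.symm (τ c)) := by rw [τ.symm_apply_apply]; exact hLf c
      _ = L (τ.symm (∑ t, (τ c) t • δ t)) := by rw [← hdecomp]
      _ = ∑ t, (τ c) t * f i (τ.symm (δ t)) := by
          rw [map_sum, map_sum]
          apply Finset.sum_congr rfl
          intro t _
          rw [_root_.map_smul, _root_.map_smul, smul_eq_mul, ← hLf]
      _ = σ0 i ⬝ᵥ τ c := by
          rw [dotProduct]
          exact Finset.sum_congr rfl (fun t _ => mul_comm _ _)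
  have hinj : Function.Injective σ0 := by
    intro i j hij
    apply hfinj
    intro c
    rw [hform i c, hform j c, hij]
  have hbij : Function.Bijective σ0 := by
    rw [Fintype.bijective_iff_injective_and_card]
    refine ⟨hinj, ?_⟩
    rw [Fintype.card_fin, Fintype.card_fun, ZMod.card, Fintype.card_fin, ← pow_mul]
  exact ⟨Equiv.ofBijective σ0 hbij, τ, fun i c => hform i c⟩
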